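/- Let V₁,…,V_m be real n×n symmetric positive definite matrices and y ∈ ℝⁿ with y ≠ 0. For σ² with nonnegative entries, σ² ≠ 0, let Ω(σ²) = Σᵢ σᵢ² Vᵢ, L(σ²) = −½ ln det Ω(σ²) − ½ yᵀ Ω(σ²)⁻¹ y, and define the MM map M by (M(σ²))ᵢ = σᵢ²·√( (yᵀΩ(σ²)⁻¹VᵢΩ(σ²)⁻¹y) / tr(Ω(σ²)⁻¹Vᵢ) ), with (M(σ²))ᵢ = 0 when σᵢ² = 0. Let σ²⁽⁰⁾ have all entries strictly positive, let σ²⁽ᵗ⁺¹⁾ = M(σ²⁽ᵗ⁾), and suppose the sequence σ²⁽ᵗ⁾ converges to a limit σ²⁽∞⁾ with σ²⁽∞⁾ ≠ 0. Then σ²⁽∞⁾ is a KKT point: for each index i, if σᵢ²⁽∞⁾ > 0 then −½·tr(Ω(σ²⁽∞⁾)⁻¹Vᵢ) + ½·yᵀΩ(σ²⁽∞⁾)⁻¹VᵢΩ(σ²⁽∞⁾)⁻¹y = 0, and if σᵢ²⁽∞⁾ = 0 then −½·tr(Ω(σ²⁽∞⁾)⁻¹Vᵢ) + ½·yᵀΩ(σ²⁽∞⁾)⁻¹VᵢΩ(σ²⁽∞⁾)⁻¹y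 ≤ 0. -/

import Mathlib

open Matrix

/-- The covariance matrix `Ω(σ²) = ∑ i, σᵢ² Vᵢ`. -/
noncomputable def covMat {m n : ℕ} (V : Fin m → Matrix (Fin n) (Fin n) ℝ)
    (s : Fin m → ℝ) : Matrix (Fin n) (Fin n) ℝ :=
  ∑ i, s i • V i

/-- The MM map `(M(σ²))ᵢ = σᵢ² √( (yᵀΩ⁻¹VᵢΩ⁻¹y) / tr(Ω⁻¹Vᵢ) )` (which is `0` whenever
`σᵢ² = 0`). -/
noncomputable def mmMap {m n : ℕ} (V : Fin m → Matrix (Fin n) (Fin n) ℝ)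
    (y : Fin n → ℝ) (s : Fin m → ℝ) : Fin m → ℝ := fun i =>
  s i * Real.sqrt ((y ⬝ᵥ ((covMat V s)⁻¹ * V i * (covMat V s)⁻¹) *ᵥ y) /
    ((covMat V s)⁻¹ * V i).trace)

lemma covMat_quad {m n : ℕ} (V : Fin m → Matrix (Fin n) (Fin n) ℝ)
    (s : Fin m → ℝ) (x : Fin n → ℝ) :
    x ⬝ᵥ (covMat V s) *ᵥ x = ∑ i, s i * (x ⬝ᵥ (V i) *ᵥ x) := by
  let L : Matrix (Fin n) (Fin n) ℝ →ₗ[ℝ] ℝ :=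
    { toFun := fun M => x ⬝ᵥ M *ᵥ x
      map_add' := fun A B => by simp only [Matrix.add_mulVec, dotProduct_add]
      map_smul' := fun c A => by
        simp only [Matrix.smul_mulVec, dotProduct_smul, smul_eq_mul, RingHom.id_apply] }
  have : x ⬝ᵥ (covMat V s) *ᵥ x = L (∑ i, s i • V i) := rfl
  rw [this, map_sum]
  refine Finset.sum_congr rfl fun i _ => ?_
  rw [_root_.map_smul]
  rfl

lemma covMat_posDef {m n : ℕ} {V : Fin m → Matrix (Fin n) (Fin n) ℝ}
    (hV : ∀ i, (V i).PosDef) {s : Fin m → ℝ} (hs : ∀ i, 0 ≤ s i)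
    {j : Fin m} (hj : 0 < s j) : (covMat V s).PosDef := by
  refine Matrix.PosDef.of_dotProduct_mulVec_pos ?_ ?_
  · show (covMat V s)ᴴ = covMat V s
    unfold covMat
    rw [Matrix.conjTranspose_sum]
    refine Finset.sum_congr rfl fun i _ => ?_
    rw [Matrix.conjTranspose_smul, (hV i).1]
    simp
  · intro x hx
    have hst : star x = x := star_trivial x
    rw [hst, covMat_quad]
    apply Finset.sum_pos' (fun i _ => mul_nonneg (hs i) (by simpa [hst] using (hV i).posSemidef.dotProduct_mulVec_nonneg x))
    exact ⟨j, Finset.mem_univ j, mul_pos hj (by simpa [hst] using (hV j).dotProduct_mulVec_pos hx)⟩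

lemma conj_quad_pos {n : ℕ} {M A : Matrix (Fin n) (Fin n) ℝ} (hM : M.PosDef)
    (hA : Aᵀ = A) (hAU : IsUnit A) {z : Fin n → ℝ} (hz : z ≠ 0) :
    0 < z ⬝ᵥ (A * M * A) *ᵥ z := by
  have hinj : Function.Injective (A.mulVec) := Matrix.mulVec_injective_iff_isUnit.mpr hAU
  have hw : A *ᵥ z ≠ 0 := by
    intro h
    exact hz (hinj (by simpa using h))
  have h1 : (A * M * A) *ᵥ z = A *ᵥ (M *ᵥ (A *ᵥ z)) := by
    rw [Matrix.mulVec_mulVec, Matrix.mulVec_mulVec, Matrix.mul_assoc]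
  rw [h1, Matrix.dotProduct_mulVec, ← Matrix.mulVec_transpose, hA]
  simpa using hM.dotProduct_mulVec_pos hw

open scoped MatrixOrder in
lemma trace_mul_pos {n : ℕ} (hn : 0 < n) {P W : Matrix (Fin n) (Fin n) ℝ}
    (hP : P.PosDef) (hW : W.PosDef) : 0 < (P * W).trace := by
  set S := CFC.sqrt W with hSdef
  have hS2 : S * S = W := CFC.sqrt_mul_sqrt_self W hW.posSemidef.nonneg
  have hSH : Sᵀ = S := by
    have := (CFC.sqrt_nonneg W).posSemidef.1
    rwa [Matrix.IsHermitian, Matrix.conjTranspose_eq_transpose_of_trivial] at this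
  have hSU : IsUnit S := by
    rw [Matrix.isUnit_iff_isUnit_det]
    have hdet : S.det * S.det = W.det := by rw [← Matrix.det_mul, hS2]
    have : W.det ≠ 0 := ne_of_gt hW.det_pos
    exact isUnit_iff_ne_zero.mpr (fun h => this (by rw [← hdet, h, zero_mul]))
  have key : (P * W).trace = (S * P * S).trace := by
    rw [← hS2, ← Matrix.mul_assoc, Matrix.trace_mul_comm (P * S) S, Matrix.mul_assoc,
      ← Matrix.mul_assoc]
  rw [key, Matrix.trace]
  apply Finset.sum_pos
  · intro j _
    have hz : (Pi.single j 1 : Fin n → ℝ) ≠ 0 := by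
      intro h
      have := congrFun h j
      simp at this
    have := conj_quad_pos hP hSH hSU hz
    have heq : (Pi.single j (1:ℝ)) ⬝ᵥ (S * P * S) *ᵥ (Pi.single j 1) = (S * P * S) j j := by
      rw [Matrix.mulVec_single, single_dotProduct]
      simp
    rw [heq] at this
    exact this
  · have : Nonempty (Fin n) := ⟨⟨0, hn⟩⟩
    exact Finset.univ_nonempty

/-- if the MM iterates converge to a nonzero limit `σ²⁽∞⁾`, then the
limit is a KKT point: the partial derivative
`∂L/∂σᵢ² = −½ tr(Ω⁻¹Vᵢ) + ½ yᵀΩ⁻¹VᵢΩ⁻¹y` vanishes at coordinates with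
`σᵢ²⁽∞⁾ > 0` and is nonpositive at coordinates with `σᵢ²⁽∞⁾ = 0`. -/
theorem mm_limit_is_kkt_point (m n : ℕ)
    (V : Fin m → Matrix (Fin n) (Fin n) ℝ) (hV : ∀ i, (V i).PosDef)
    (y : Fin n → ℝ) (hy : y ≠ 0) (s : ℕ → Fin m → ℝ)
    (h0 : ∀ i, 0 < s 0 i) (hrec : ∀ t, s (t + 1) = mmMap V y (s t))
    (slim : Fin m → ℝ) (hlim : Filter.Tendsto s Filter.atTop (nhds slim))
    (hne : slim ≠ 0) :
    ∀ i, (0 < slim i →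
        -(1 / 2 : ℝ) * ((covMat V slim)⁻¹ * V i).trace +
          (1 / 2 : ℝ) * (y ⬝ᵥ ((covMat V slim)⁻¹ * V i * (covMat V slim)⁻¹) *ᵥ y) = 0) ∧
      (slim i = 0 →
        -(1 / 2 : ℝ) * ((covMat V slim)⁻¹ * V i).trace +
          (1 / 2 : ℝ) * (y ⬝ᵥ ((covMat V slim)⁻¹ * V i * (covMat V slim)⁻¹) *ᵥ y) ≤ 0) := by
  have hn : 0 < n := Nat.pos_of_ne_zero (by rintro rfl; exact hy (funext fun k => Fin.elim0 k))
  have hm : m ≠ 0 := by rintro rfl; exact hne (funext fun j => Fin.elim0 j)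
  have j0 : Fin m := ⟨0, Nat.pos_of_ne_zero hm⟩
  -- positivity of all iterates
  have hpos : ∀ t i', 0 < s t i' := by
    intro t
    induction t with
    | zero => exact h0
    | succ t ih =>
      intro i'
      rw [hrec t]
      have hΩ : (covMat V (s t)).PosDef := covMat_posDef hV (fun k => (ih k).le) (ih j0)
      have hΩinv : ((covMat V (s t))⁻¹).PosDef := hΩ.inv
      have hΩT : ((covMat V (s t))⁻¹)ᵀ = (covMat V (s t))⁻¹ := by
        have := hΩinv.1
        rwa [Matrix.IsHermitian, Matrix.conjTranspose_eq_transpose_of_trivial] at this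
      have hA : 0 < ((covMat V (s t))⁻¹ * V i').trace := trace_mul_pos hn hΩinv (hV i')
      have hB : 0 < y ⬝ᵥ ((covMat V (s t))⁻¹ * V i' * (covMat V (s t))⁻¹) *ᵥ y :=
        conj_quad_pos (hV i') hΩT hΩinv.isUnit hy
      exact mul_pos (ih i') (Real.sqrt_pos.mpr (div_pos hB hA))
  -- componentwise convergence and nonnegativity of the limit
  have hci : ∀ i', Filter.Tendsto (fun t => s t i') Filter.atTop (nhds (slim i')) :=
    fun i' => tendsto_pi_nhds.mp hlim i'
  have hnn : ∀ i', 0 ≤ slim i' :=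
    fun i' => ge_of_tendsto (hci i') (Filter.Eventually.of_forall fun t => (hpos t i').le)
  obtain ⟨j, hj⟩ : ∃ j, slim j ≠ 0 := Function.ne_iff.mp hne
  have hjpos : 0 < slim j := lt_of_le_of_ne (hnn j) (Ne.symm hj)
  have hΩl : (covMat V slim).PosDef := covMat_posDef hV hnn hjpos
  have hΩlinv : ((covMat V slim)⁻¹).PosDef := hΩl.inv
  have hΩlT : ((covMat V slim)⁻¹)ᵀ = (covMat V slim)⁻¹ := by
    have := hΩlinv.1
    rwa [Matrix.IsHermitian, Matrix.conjTranspose_eq_transpose_of_trivial] at this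
  -- continuity
  have hcov : Continuous (covMat V : (Fin m → ℝ) → Matrix (Fin n) (Fin n) ℝ) := by
    unfold covMat
    exact continuous_finset_sum _ fun i _ => (continuous_apply i).smul continuous_const
  have hinv : ContinuousAt (fun v => (covMat V v)⁻¹) slim := by
    refine ContinuousAt.comp ?_ hcov.continuousAt
    apply continuousAt_matrix_inv
    rw [Ring.inverse_eq_inv']
    exact continuousAt_inv₀ (ne_of_gt hΩl.det_pos)
  intro i
  set a : ℝ := ((covMat V slim)⁻¹ * V i).trace with ha_def
  set b : ℝ := y ⬝ᵥ ((covMat V slim)⁻¹ * V i * (covMat V slim)⁻¹) *ᵥ y with hb_def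
  have ha : 0 < a := trace_mul_pos hn hΩlinv (hV i)
  have hb : 0 < b := conj_quad_pos (hV i) hΩlT hΩlinv.isUnit hy
  have hFA : Filter.Tendsto (fun t => ((covMat V (s t))⁻¹ * V i).trace) Filter.atTop (nhds a) := by
    have c1 : Continuous (fun M : Matrix (Fin n) (Fin n) ℝ => (M * V i).trace) :=
      (continuous_id.matrix_mul continuous_const).matrix_trace
    exact (c1.continuousAt.comp hinv).tendsto.comp hlim
  have hGB : Filter.Tendsto
      (fun t => y ⬝ᵥ ((covMat V (s t))⁻¹ * V i * (covMat V (s t))⁻¹) *ᵥ y)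
      Filter.atTop (nhds b) := by
    have c2 : Continuous (fun M : Matrix (Fin n) (Fin n) ℝ => y ⬝ᵥ (M * V i * M) *ᵥ y) :=
      continuous_const.dotProduct
        (((continuous_id.matrix_mul continuous_const).matrix_mul continuous_id).matrix_mulVec
          continuous_const)
    exact (c2.continuousAt.comp hinv).tendsto.comp hlim
  have hrt : Filter.Tendsto
      (fun t => Real.sqrt ((y ⬝ᵥ ((covMat V (s t))⁻¹ * V i * (covMat V (s t))⁻¹) *ᵥ y) /
        ((covMat V (s t))⁻¹ * V i).trace)) Filter.atTop (nhds (Real.sqrt (b / a))) :=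
    (Real.continuous_sqrt.continuousAt.tendsto).comp (hGB.div hFA (ne_of_gt ha))
  have hs1 : Filter.Tendsto (fun t => s (t + 1) i) Filter.atTop (nhds (slim i)) :=
    (hci i).comp (Filter.tendsto_add_atTop_nat 1)
  have hseq : (fun t => s (t + 1) i) =
      fun t => s t i * Real.sqrt ((y ⬝ᵥ ((covMat V (s t))⁻¹ * V i * (covMat V (s t))⁻¹) *ᵥ y) /
        ((covMat V (s t))⁻¹ * V i).trace) :=
    funext fun t => by rw [hrec t]; rfl
  have heq : slim i = slim i * Real.sqrt (b / a) :=
    tendsto_nhds_unique hs1 (hseq ▸ (hci i).mul hrt)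
  constructor
  · intro hpi
    have hsq : Real.sqrt (b / a) = 1 := by
      have := heq
      field_simp at this
      rcases mul_eq_mul_left_iff.mp (by linarith [this] : slim i * 1 = slim i * Real.sqrt (b / a)) with h | h
      · exact h.symm
      · exact absurd h (ne_of_gt hpi)
    have hba : b / a = 1 := by
      have h2 := congrArg (fun x => x ^ 2) hsq
      simpa [Real.sq_sqrt (le_of_lt (div_pos hb ha))] using h2
    have : b = a := by
      field_simp at hba
      linarith
    linarith
  · intro hzero
    by_contra hcon
    push_neg at hcon
    have hab : a < b := by linarith
    have h1lt : 1 < Real.sqrt (b / a) := by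
      rw [show (1:ℝ) = Real.sqrt 1 by simp]
      exact Real.sqrt_lt_sqrt (by norm_num) ((one_lt_div ha).mpr hab)
    have hev : ∀ᶠ t in Filter.atTop,
        1 ≤ Real.sqrt ((y ⬝ᵥ ((covMat V (s t))⁻¹ * V i * (covMat V (s t))⁻¹) *ᵥ y) /
          ((covMat V (s t))⁻¹ * V i).trace) :=
      hrt.eventually (eventually_ge_nhds h1lt)
    obtain ⟨T, hT⟩ := Filter.eventually_atTop.mp hev
    have mono : ∀ d, s T i ≤ s (T + d) i := by
      intro d
      induction d with
      | zero => simp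
      | succ d ih =>
        have hstep : s (T + d) i ≤ s (T + d + 1) i := by
          rw [hrec (T + d)]
          show s (T + d) i ≤ s (T + d) i * Real.sqrt _
          nth_rewrite 1 [← mul_one (s (T + d) i)]
          exact mul_le_mul_of_nonneg_left (hT (T + d) (Nat.le_add_right T d))
            (hpos (T + d) i).le
        calc s T i ≤ s (T + d) i := ih
        _ ≤ s (T + d + 1) i := hstep
    have hlt : ∀ᶠ t in Filter.atTop, s t i < s T i := by
      have h := hci i
      rw [hzero] at h
      exact h.eventually (eventually_lt_nhds (hpos T i))
    obtain ⟨T', hT'⟩ := Filter.eventually_atTop.mp hlt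
    have h1 := hT' (T + T') (by omega)
    have h2 := mono T'
    linarith
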